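/- arXiv:1303.4615 — 5 statements merged into one kernel-verified Lean document; each statement's English description precedes it below -/
import Mathlib

section
/- The occupation measure μ associated with an initial distribution μ₀ satisfies Liouville's equation in weak form: for every v ∈ C¹([0,1] × ℝⁿ), ∫ L v dμ = ∫ v(1,·) dμ₁ − ∫ v(0,·) dμ₀, where μ₁ is the pushforward of μ₀ under the time-1 flow and L v = ∂v/∂t + ∇ₓv · f. -/
open MeasureTheory Set

/-- Liouville's equation in weak form: the occupation measure `μ` associated with an initial
distribution `μ₀` satisfies `∫ L v dμ = ∫ v(1,·) dμ₁ − ∫ v(0,·) dμ₀` for every `C¹` test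
function `v`, where `μ₁` is the pushforward of `μ₀` under the time-1 flow and
`L v = ∂v/∂t + ∇ₓv · f`. -/
theorem stmt_4 {n : ℕ} (X : Set (Fin n → ℝ)) (hX : IsCompact X)
    (f : ℝ → (Fin n → ℝ) → (Fin n → ℝ))
    (hf : Continuous fun p : ℝ × (Fin n → ℝ) => f p.1 p.2)
    (flow : ℝ → (Fin n → ℝ) → (Fin n → ℝ))
    (hflowc : Continuous fun p : ℝ × (Fin n → ℝ) => flow p.1 p.2)
    (h0 : ∀ x₀ ∈ X, flow 0 x₀ = x₀)
    (hstay : ∀ x₀ ∈ X, ∀ t ∈ Icc (0:ℝ) 1, flow t x₀ ∈ X)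
    (hode : ∀ x₀ ∈ X, ∀ t ∈ Icc (0:ℝ) 1,
      HasDerivAt (fun s => flow s x₀) (f t (flow t x₀)) t)
    (μ₀ : Measure (Fin n → ℝ)) [IsProbabilityMeasure μ₀] (hμ₀X : μ₀ Xᶜ = 0)
    (v : ℝ × (Fin n → ℝ) → ℝ) (hv : ContDiff ℝ 1 v) :
    ∫ p, fderiv ℝ v p (1, f p.1 p.2)
        ∂(Measure.map (fun q : ℝ × (Fin n → ℝ) => (q.1, flow q.1 q.2))
            ((volume.restrict (Icc (0:ℝ) 1)).prod μ₀))
      = ∫ x, v (1, x) ∂(Measure.map (flow 1) μ₀) - ∫ x, v (0, x) ∂μ₀ := by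
  have h01 : (0:ℝ) ≤ 1 := zero_le_one
  haveI : IsFiniteMeasure (volume.restrict (Icc (0:ℝ) 1)) :=
    ⟨by rw [Measure.restrict_apply_univ]; simp [Real.volume_Icc]⟩
  set ν := (volume.restrict (Icc (0:ℝ) 1)).prod μ₀ with hνdef
  have hXae : ∀ᵐ x ∂μ₀, x ∈ X := by
    rw [Filter.eventually_iff, mem_ae_iff]
    simpa using hμ₀X
  -- continuity facts
  have hΦ : Continuous fun q : ℝ × (Fin n → ℝ) => ((q.1, flow q.1 q.2) : ℝ × (Fin n → ℝ)) :=
    continuous_fst.prodMk hflowc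
  have hDv : Continuous (fderiv ℝ v) := hv.continuous_fderiv one_ne_zero
  have hg : Continuous fun p : ℝ × (Fin n → ℝ) => fderiv ℝ v p (1, f p.1 p.2) :=
    hDv.clm_apply (continuous_const.prodMk hf)
  have hG : Continuous fun q : ℝ × (Fin n → ℝ) =>
      fderiv ℝ v (q.1, flow q.1 q.2) (1, f q.1 (flow q.1 q.2)) := hg.comp hΦ
  have hflow1 : Continuous (flow 1) := hflowc.comp (continuous_const.prodMk continuous_id)
  have hv1 : Continuous fun x : Fin n → ℝ => v (1, x) :=
    hv.continuous.comp (continuous_const.prodMk continuous_id)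
  have hv0 : Continuous fun x : Fin n → ℝ => v (0, x) :=
    hv.continuous.comp (continuous_const.prodMk continuous_id)
  -- rewrite via pushforward
  rw [integral_map hΦ.aemeasurable hg.aestronglyMeasurable,
      integral_map hflow1.aemeasurable hv1.aestronglyMeasurable]
  -- a.e. membership in the compact set
  have hνK : ∀ᵐ q ∂ν, q ∈ Icc (0:ℝ) 1 ×ˢ X := by
    rw [Filter.eventually_iff, mem_ae_iff]
    have hsub : ({q : ℝ × (Fin n → ℝ) | q ∈ Icc (0:ℝ) 1 ×ˢ X})ᶜ
        ⊆ (Icc (0:ℝ) 1)ᶜ ×ˢ (univ : Set (Fin n → ℝ)) ∪ (univ : Set ℝ) ×ˢ Xᶜ := by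
      intro q hq
      simp only [mem_compl_iff, mem_setOf_eq, mem_prod, not_and_or] at hq
      rcases hq with h | h
      · exact Or.inl ⟨h, mem_univ _⟩
      · exact Or.inr ⟨mem_univ _, h⟩
    refine measure_mono_null hsub (measure_union_null ?_ ?_)
    · rw [Measure.prod_prod]
      have : (volume.restrict (Icc (0:ℝ) 1)) (Icc (0:ℝ) 1)ᶜ = 0 := by
        rw [Measure.restrict_apply measurableSet_Icc.compl]
        simp
      rw [this, zero_mul]
    · rw [Measure.prod_prod, hμ₀X, mul_zero]
  -- integrability on the product
  have hKcpt : IsCompact (Icc (0:ℝ) 1 ×ˢ X) := isCompact_Icc.prod hX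
  obtain ⟨C, hC⟩ := hKcpt.exists_bound_of_continuousOn hG.continuousOn
  have hint : Integrable
      (fun q : ℝ × (Fin n → ℝ) => fderiv ℝ v (q.1, flow q.1 q.2) (1, f q.1 (flow q.1 q.2))) ν :=
    (integrable_const C).mono' hG.aestronglyMeasurable (hνK.mono fun q hq => hC _ hq)
  rw [MeasureTheory.integral_prod_symm _ hint]
  -- FTC for each initial condition
  have key : ∀ x₀ ∈ X,
      (∫ t in Icc (0:ℝ) 1, fderiv ℝ v (t, flow t x₀) (1, f t (flow t x₀)))
        = v (1, flow 1 x₀) - v (0, x₀) := by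
    intro x₀ hx₀
    have hd : ∀ t ∈ uIcc (0:ℝ) 1,
        HasDerivAt (fun s => v (s, flow s x₀))
          (fderiv ℝ v (t, flow t x₀) (1, f t (flow t x₀))) t := by
      intro t ht
      rw [uIcc_of_le h01] at ht
      have h1 : HasDerivAt (fun s => ((s, flow s x₀) : ℝ × (Fin n → ℝ)))
          ((1 : ℝ), f t (flow t x₀)) t :=
        (hasDerivAt_id t).prodMk (hode x₀ hx₀ t ht)
      have h2 : HasFDerivAt v (fderiv ℝ v (t, flow t x₀)) (t, flow t x₀) :=
        (hv.differentiable one_ne_zero _).hasFDerivAt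
      exact h2.comp_hasDerivAt t h1
    have hcont : Continuous fun t => fderiv ℝ v (t, flow t x₀) (1, f t (flow t x₀)) :=
      hG.comp (continuous_id.prodMk continuous_const)
    rw [MeasureTheory.integral_Icc_eq_integral_Ioc, ← intervalIntegral.integral_of_le h01,
      intervalIntegral.integral_eq_sub_of_hasDerivAt hd (hcont.intervalIntegrable 0 1)]
    rw [h0 x₀ hx₀]
  -- integrability of the boundary terms
  obtain ⟨C1, hC1⟩ := hX.exists_bound_of_continuousOn (hv1.comp hflow1).continuousOn
  obtain ⟨C2, hC2⟩ := hX.exists_bound_of_continuousOn hv0.continuousOn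
  have h1int : Integrable (fun x => v (1, flow 1 x)) μ₀ :=
    (integrable_const C1).mono' (hv1.comp hflow1).aestronglyMeasurable
      (hXae.mono fun x hx => hC1 _ hx)
  have h2int : Integrable (fun x => v (0, x)) μ₀ :=
    (integrable_const C2).mono' hv0.aestronglyMeasurable (hXae.mono fun x hx => hC2 _ hx)
  rw [← integral_sub h1int h2int]
  exact integral_congr_ae (hXae.mono fun x₀ hx₀ => key x₀ hx₀)
end

section
/- Any dual-feasible pair (v₀, v) yields an outer approximation of the region of attraction: if v₀ ≥ 0 on X, v₀ ≥ 1 + v(0,·) on X, v(1,·) ≥ 0 on X₁, and ∂v/∂t + ∇ₓv·f ≤ 0 on [0,1]×X, then every x₀ ∈ X whose trajectory x(t|x₀) stays in X for all t ∈ [0,1] and satisfies x(1|x₀) ∈ X₁ must satisfy v₀(x₀) ≥ 1. Hence X₀* ⊆ {x : v₀(x) ≥ 1}. -/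
open Set

/-- Any dual-feasible pair `(v₀, v)` yields an outer approximation of the region of
attraction: every consistent initial condition `x₀` satisfies `v₀(x₀) ≥ 1`. -/
theorem stmt_8 {n : ℕ} (X X₁ : Set (Fin n → ℝ)) (hX : IsCompact X)
    (hX₁ : IsClosed X₁) (hX₁X : X₁ ⊆ X)
    (f : ℝ → (Fin n → ℝ) → (Fin n → ℝ))
    (hf : Continuous fun p : ℝ × (Fin n → ℝ) => f p.1 p.2)
    (v₀ : (Fin n → ℝ) → ℝ) (hv₀c : Continuous v₀)
    (v : ℝ × (Fin n → ℝ) → ℝ) (hvc : ContDiff ℝ 1 v)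
    (h1 : ∀ x ∈ X, 0 ≤ v₀ x)
    (h2 : ∀ x ∈ X, 1 + v (0, x) ≤ v₀ x)
    (h3 : ∀ x ∈ X₁, 0 ≤ v (1, x))
    (h4 : ∀ t ∈ Icc (0:ℝ) 1, ∀ x ∈ X, fderiv ℝ v (t, x) (1, f t x) ≤ 0)
    (x₀ : Fin n → ℝ) (hx₀ : x₀ ∈ X)
    (x : ℝ → (Fin n → ℝ)) (hx0 : x 0 = x₀)
    (hode : ∀ t ∈ Icc (0:ℝ) 1, HasDerivAt x (f t (x t)) t)
    (hstay : ∀ t ∈ Icc (0:ℝ) 1, x t ∈ X)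
    (hend : x 1 ∈ X₁) :
    1 ≤ v₀ x₀ := by
  set g : ℝ → ℝ := fun t => v (t, x t) with hg
  have hderiv : ∀ t ∈ Icc (0:ℝ) 1,
      HasDerivAt g (fderiv ℝ v (t, x t) (1, f t (x t))) t := by
    intro t ht
    have hx' : HasDerivAt (fun t => ((t, x t) : ℝ × (Fin n → ℝ))) (1, f t (x t)) t :=
      (hasDerivAt_id t).prodMk (hode t ht)
    have hv' : HasFDerivAt v (fderiv ℝ v (t, x t)) (t, x t) :=
      (hvc.differentiable one_ne_zero (t, x t)).hasFDerivAt
    exact hv'.comp_hasDerivAt t hx'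
  have hcont : ContinuousOn g (Icc 0 1) := fun t ht =>
    ((hderiv t ht).continuousAt).continuousWithinAt
  have hanti : AntitoneOn g (Icc 0 1) := by
    apply antitoneOn_of_deriv_nonpos (convex_Icc 0 1) hcont
    · intro t ht
      rw [interior_Icc] at ht
      exact ((hderiv t (Ioo_subset_Icc_self ht)).differentiableAt).differentiableWithinAt
    · intro t ht
      rw [interior_Icc] at ht
      have ht' := Ioo_subset_Icc_self ht
      rw [(hderiv t ht').deriv]
      exact h4 t ht' (x t) (hstay t ht')
  have h01 : g 1 ≤ g 0 := hanti (left_mem_Icc.2 one_pos.le) (right_mem_Icc.2 one_pos.le) one_pos.le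
  have h0 : (0:ℝ) ≤ g 1 := h3 (x 1) hend
  have hg0 : g 0 = v (0, x₀) := by simp [hg, hx0]
  have := h2 x₀ hx₀
  linarith
end

section
/- Multi-time-point outer approximation: suppose continuous functions v₀ on X and v_{k,k+1} ∈ C¹ (k = 0,…,m−2) satisfy v₀ ≥ 0 on X, v₀(x) ≥ 1 + v_{0,1}(0,x) for x ∈ X, v_{k−1,k}(t_k,x) ≥ v_{k,k+1}(t_k,x) for x ∈ X_k (k = 1,…,m−2), v_{m−2,m−1}(t_{m−1},x) ≥ 0 for x ∈ X_{m−1}, and −L v_{k,k+1} ≥ 0 on [0,1]×X for every k. Then every initial condition x₀ ∈ X admitting a trajectory with x(t|x₀) ∈ X for all t ∈ [0,1] and x(t_k|x₀) ∈ X_k for all k = 1,…,m−1 satisfies v₀(x₀) ≥ 1. -/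
open Set

/-- Multi-time-point outer approximation: if `v₀` and the `C¹` functions `v k = v_{k,k+1}`
satisfy the dual feasibility conditions, then every initial condition admitting a trajectory
staying in `X` and satisfying the measurement constraints `X_k` at the times `t_k`
satisfies `v₀(x₀) ≥ 1`. -/
theorem stmt_9 {n m : ℕ} (hm : 2 ≤ m)
    (X : Set (Fin n → ℝ)) (hX : IsCompact X)
    (Xk : ℕ → Set (Fin n → ℝ)) (hXk : ∀ k, IsClosed (Xk k) ∧ Xk k ⊆ X)
    (t : ℕ → ℝ) (ht0 : t 0 = 0) (ht1 : t (m - 1) = 1)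
    (htmono : ∀ k < m - 1, t k < t (k + 1))
    (f : ℝ → (Fin n → ℝ) → (Fin n → ℝ))
    (hf : Continuous fun p : ℝ × (Fin n → ℝ) => f p.1 p.2)
    (v₀ : (Fin n → ℝ) → ℝ) (hv₀c : Continuous v₀)
    (v : ℕ → ℝ × (Fin n → ℝ) → ℝ) (hvc : ∀ k < m - 1, ContDiff ℝ 1 (v k))
    (h1 : ∀ x ∈ X, 0 ≤ v₀ x)
    (h2 : ∀ x ∈ X, 1 + v 0 (0, x) ≤ v₀ x)
    (h3 : ∀ k, 1 ≤ k → k ≤ m - 2 → ∀ x ∈ Xk k, v k (t k, x) ≤ v (k - 1) (t k, x))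
    (h4 : ∀ x ∈ Xk (m - 1), 0 ≤ v (m - 2) (t (m - 1), x))
    (h5 : ∀ k < m - 1, ∀ s ∈ Icc (0:ℝ) 1, ∀ x ∈ X,
      fderiv ℝ (v k) (s, x) (1, f s x) ≤ 0)
    (x₀ : Fin n → ℝ) (hx₀ : x₀ ∈ X)
    (x : ℝ → (Fin n → ℝ)) (hx0 : x 0 = x₀)
    (hode : ∀ s ∈ Icc (0:ℝ) 1, HasDerivAt x (f s (x s)) s)
    (hstay : ∀ s ∈ Icc (0:ℝ) 1, x s ∈ X)
    (hmeas : ∀ k, 1 ≤ k → k ≤ m - 1 → x (t k) ∈ Xk k) :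
    1 ≤ v₀ x₀ := by
  -- g k s = v k (s, x s)
  set g : ℕ → ℝ → ℝ := fun k s => v k (s, x s) with hg
  -- derivative of g k on Icc 0 1
  have hderiv : ∀ k < m - 1, ∀ s ∈ Icc (0:ℝ) 1,
      HasDerivAt (g k) (fderiv ℝ (v k) (s, x s) (1, f s (x s))) s := by
    intro k hk s hs
    have hxd : HasDerivAt (fun s : ℝ => (s, x s)) ((1 : ℝ), f s (x s)) s := by
      exact HasDerivAt.prodMk (hasDerivAt_id s) (hode s hs)
    have hvd : HasFDerivAt (v k) (fderiv ℝ (v k) (s, x s)) (s, x s) :=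
      ((hvc k hk).differentiable one_ne_zero (s, x s)).hasFDerivAt
    exact hvd.comp_hasDerivAt s hxd
  -- g k is antitone on Icc 0 1
  have hanti : ∀ k < m - 1, ∀ a ∈ Icc (0:ℝ) 1, ∀ b ∈ Icc (0:ℝ) 1, a ≤ b →
      g k b ≤ g k a := by
    intro k hk a ha b hb hab
    have hA : AntitoneOn (g k) (Icc (0:ℝ) 1) := by
      apply antitoneOn_of_deriv_nonpos (convex_Icc 0 1)
      · intro s hs
        exact ((hderiv k hk s hs).continuousAt).continuousWithinAt
      · intro s hs
        rw [interior_Icc] at hs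
        exact ((hderiv k hk s (Ioo_subset_Icc_self hs)).differentiableAt).differentiableWithinAt
      · intro s hs
        rw [interior_Icc] at hs
        have hs' : s ∈ Icc (0:ℝ) 1 := Ioo_subset_Icc_self hs
        rw [(hderiv k hk s hs').deriv]
        exact h5 k hk s hs' (x s) (hstay s hs')
    exact hA ha hb hab
  -- t is monotone up to m-1
  have htm : ∀ j k, j ≤ k → k ≤ m - 1 → t j ≤ t k := by
    intro j k hjk hk
    induction k with
    | zero => simp [Nat.le_zero.mp hjk]
    | succ k ih =>
      rcases Nat.lt_or_ge j (k + 1) with h | h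
      · have : t j ≤ t k := ih (Nat.lt_succ_iff.mp h) (by omega)
        exact this.trans (htmono k (by omega)).le
      · have : j = k + 1 := le_antisymm hjk h
        simp [this]
  have htIcc : ∀ k ≤ m - 1, t k ∈ Icc (0:ℝ) 1 := by
    intro k hk
    constructor
    · rw [← ht0]; exact htm 0 k (Nat.zero_le _) hk
    · rw [← ht1]; exact htm k (m - 1) hk le_rfl
  -- descending induction
  have key : ∀ i, i ≤ m - 2 → 0 ≤ g (m - 2 - i) (t (m - 2 - i)) := by
    intro i
    induction i with
    | zero =>
      intro _
      simp only [Nat.sub_zero]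
      have hle : g (m - 2) (t (m - 1)) ≤ g (m - 2) (t (m - 2)) :=
        hanti (m - 2) (by omega) (t (m - 2)) (htIcc _ (by omega))
          (t (m - 1)) (htIcc _ le_rfl) (htm (m - 2) (m - 1) (by omega) le_rfl)
      have h0 : 0 ≤ g (m - 2) (t (m - 1)) :=
        h4 (x (t (m - 1))) (hmeas (m - 1) (by omega) le_rfl)
      linarith
    | succ i ih =>
      intro hi
      set k := m - 2 - (i + 1) with hk
      have hk1 : k + 1 = m - 2 - i := by omega
      have hIH : 0 ≤ g (k + 1) (t (k + 1)) := by rw [hk1]; exact ih (by omega)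
      have h3' : v (k + 1) (t (k + 1), x (t (k + 1))) ≤ v k (t (k + 1), x (t (k + 1))) := by
        have := h3 (k + 1) (by omega) (by omega) (x (t (k + 1)))
          (hmeas (k + 1) (by omega) (by omega))
        simpa using this
      have hmono : g k (t (k + 1)) ≤ g k (t k) :=
        hanti k (by omega) (t k) (htIcc _ (by omega)) (t (k + 1)) (htIcc _ (by omega))
          (htm k (k + 1) (by omega) (by omega))
      have : (0:ℝ) ≤ g k (t (k + 1)) := le_trans hIH h3'
      linarith
  have h0 : 0 ≤ g 0 (t 0) := by
    have := key (m - 2) le_rfl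
    simpa using this
  have hv00 : 0 ≤ v 0 (0, x₀) := by
    rw [hg] at h0
    simp only at h0
    rwa [ht0, hx0] at h0
  have := h2 x₀ hx₀
  linarith
end

section
/- If the dual-feasible function v₀ additionally satisfies ∫_X v₀ dλ < λ(X₀*) for Lebesgue measure λ, a contradiction follows; equivalently, for any dual-feasible (v₀, v), λ(X₀*) ≤ ∫_X v₀ dλ. -/
open MeasureTheory Set

/-- For any dual-feasible pair `(v₀, v)`, the Lebesgue volume of the consistent set `X₀*`
is bounded by `∫_X v₀ dλ`. -/
theorem stmt_10 {n : ℕ} (X X₁ : Set (Fin n → ℝ)) (hX : IsCompact X)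
    (hX₁ : IsClosed X₁) (hX₁X : X₁ ⊆ X)
    (f : ℝ → (Fin n → ℝ) → (Fin n → ℝ))
    (hf : Continuous fun p : ℝ × (Fin n → ℝ) => f p.1 p.2)
    (v₀ : (Fin n → ℝ) → ℝ) (hv₀c : Continuous v₀)
    (v : ℝ × (Fin n → ℝ) → ℝ) (hvc : ContDiff ℝ 1 v)
    (h1 : ∀ x ∈ X, 0 ≤ v₀ x)
    (h2 : ∀ x ∈ X, 1 + v (0, x) ≤ v₀ x)
    (h3 : ∀ x ∈ X₁, 0 ≤ v (1, x))
    (h4 : ∀ t ∈ Icc (0:ℝ) 1, ∀ x ∈ X, fderiv ℝ v (t, x) (1, f t x) ≤ 0) :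
    volume {x₀ | x₀ ∈ X ∧ ∃ x : ℝ → (Fin n → ℝ), x 0 = x₀ ∧
        (∀ t ∈ Icc (0:ℝ) 1, HasDerivAt x (f t (x t)) t) ∧
        (∀ t ∈ Icc (0:ℝ) 1, x t ∈ X) ∧ x 1 ∈ X₁}
      ≤ ENNReal.ofReal (∫ x in X, v₀ x) := by
  have hvd : Differentiable ℝ v := hvc.differentiable one_ne_zero
  -- Step 1: the consistent set is contained in A := {x ∈ X | 1 ≤ v₀ x}
  set A : Set (Fin n → ℝ) := {x | x ∈ X ∧ 1 ≤ v₀ x} with hA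
  have hsub : {x₀ | x₀ ∈ X ∧ ∃ x : ℝ → (Fin n → ℝ), x 0 = x₀ ∧
      (∀ t ∈ Icc (0:ℝ) 1, HasDerivAt x (f t (x t)) t) ∧
      (∀ t ∈ Icc (0:ℝ) 1, x t ∈ X) ∧ x 1 ∈ X₁} ⊆ A := by
    rintro x₀ ⟨hx₀X, x, hx0, hxderiv, hxX, hx1⟩
    refine ⟨hx₀X, ?_⟩
    -- g t = v (t, x t) is antitone on [0,1]
    set g : ℝ → ℝ := fun t => v (t, x t) with hg
    have hgderiv : ∀ t ∈ Icc (0:ℝ) 1,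
        HasDerivAt g (fderiv ℝ v (t, x t) (1, f t (x t))) t := by
      intro t ht
      have hp : HasDerivAt (fun s : ℝ => (s, x s)) (1, f t (x t)) t :=
        (hasDerivAt_id t).prodMk (hxderiv t ht)
      exact (hvd (t, x t)).hasFDerivAt.comp_hasDerivAt t hp
    have hgd : ∀ t ∈ Icc (0:ℝ) 1, DifferentiableAt ℝ g t := fun t ht =>
      (hgderiv t ht).differentiableAt
    have hanti : AntitoneOn g (Icc (0:ℝ) 1) := by
      apply antitoneOn_of_deriv_nonpos (convex_Icc 0 1)
      · exact fun t ht => (hgd t ht).continuousAt.continuousWithinAt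
      · intro t ht
        rw [interior_Icc] at ht
        exact (hgd t (Ioo_subset_Icc_self ht)).differentiableWithinAt
      · intro t ht
        rw [interior_Icc] at ht
        have ht' := Ioo_subset_Icc_self ht
        rw [(hgderiv t ht').deriv]
        exact h4 t ht' (x t) (hxX t ht')
    have h01 : g 1 ≤ g 0 := hanti (by norm_num) (by norm_num) (by norm_num)
    have hg1 : 0 ≤ g 1 := h3 (x 1) hx1
    have := h2 x₀ hx₀X
    have hg0 : v (0, x₀) = g 0 := by rw [hg]; simp [hx0]
    linarith
  refine le_trans (measure_mono hsub) ?_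
  -- Step 2: volume A ≤ ∫_X v₀
  have hAclosed : IsClosed A := by
    have : A = X ∩ v₀ ⁻¹' Ici 1 := by ext y; simp [hA, mem_preimage]
    rw [this]
    exact hX.isClosed.inter (isClosed_Ici.preimage hv₀c)
  have hAX : A ⊆ X := fun y hy => hy.1
  have hAfin : volume A ≠ ⊤ :=
    ((measure_mono hAX).trans_lt hX.measure_lt_top).ne
  have hintX : IntegrableOn v₀ X volume :=
    hv₀c.continuousOn.integrableOn_compact hX
  have hintA : IntegrableOn v₀ A volume := hintX.mono_set hAX
  have key : (volume A).toReal ≤ ∫ x in X, v₀ x := by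
    have h1' : ∫ x in A, (1:ℝ) ≤ ∫ x in A, v₀ x := by
      apply setIntegral_mono_on (integrableOn_const hAfin)
        hintA hAclosed.measurableSet
      exact fun y hy => hy.2
    have h2' : ∫ x in A, v₀ x ≤ ∫ x in X, v₀ x := by
      apply setIntegral_mono_set hintX
      · exact (ae_restrict_iff' hX.isClosed.measurableSet).2 (Filter.Eventually.of_forall h1)
      · exact HasSubset.Subset.eventuallyLE hAX
    have h3' : ∫ x in A, (1:ℝ) = (volume A).toReal := by
      simp [setIntegral_const, measureReal_def]
    linarith
  calc volume A = ENNReal.ofReal (volume A).toReal := (ENNReal.ofReal_toReal hAfin).symm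
    _ ≤ ENNReal.ofReal (∫ x in X, v₀ x) := ENNReal.ofReal_le_ofReal key
end

section
/- If x₀ ∈ X₀* (the consistent set) then the Dirac measures μ₀ = δ_{x₀}, μ_k = δ_{x(t_k|x₀)}, together with the arc occupation measures μ_{k,k+1} of the trajectory, form a feasible solution of the multi-arc Liouville system: L' μ_{k,k+1} = δ_{t_{k+1}} μ_{k+1} − δ_{t_k} μ_k in weak form, with supp μ_k ⊆ X_k and supp μ_{k,k+1} ⊆ [t_k,t_{k+1}]×X. Consequently, if no such family of measures exists, then X₀* is empty. -/
open MeasureTheory Set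

/-- If `x₀` belongs to the consistent set `X₀*`, then the Dirac measures
`μ_k = δ_{x(t_k|x₀)}` together with the arc occupation measures `μ_{k,k+1}` of the
trajectory form a feasible solution of the multi-arc Liouville system:
each `μ_{k,k+1}` satisfies the arc Liouville equation in weak form, is supported on
`[t_k,t_{k+1}] × X`, and each `μ_k` is supported on `X_k`. (Consequently, if no such
family of measures exists, `X₀*` is empty.) -/
theorem stmt_15 {n m : ℕ} (hm : 2 ≤ m)
    (X : Set (Fin n → ℝ)) (hX : IsCompact X)
    (Xk : ℕ → Set (Fin n → ℝ)) (hXk : ∀ k ≤ m - 1, IsClosed (Xk k) ∧ Xk k ⊆ X)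
    (t : ℕ → ℝ) (ht0 : t 0 = 0) (ht1 : t (m - 1) = 1)
    (hmono : ∀ k < m - 1, t k ≤ t (k + 1)) (htmem : ∀ k ≤ m - 1, t k ∈ Icc (0:ℝ) 1)
    (f : ℝ → (Fin n → ℝ) → (Fin n → ℝ))
    (hf : Continuous fun p : ℝ × (Fin n → ℝ) => f p.1 p.2)
    (flow : ℝ → (Fin n → ℝ) → (Fin n → ℝ))
    (x₀ : Fin n → ℝ) (hx₀X : x₀ ∈ X)
    (hflow0 : flow 0 x₀ = x₀)
    (hode : ∀ s ∈ Icc (0:ℝ) 1, HasDerivAt (fun r => flow r x₀) (f s (flow s x₀)) s)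
    (hstay : ∀ s ∈ Icc (0:ℝ) 1, flow s x₀ ∈ X)
    (hcons : ∀ k ≤ m - 1, flow (t k) x₀ ∈ Xk k) :
    (∀ k ≤ m - 1, Measure.dirac (flow (t k) x₀) (Xk k)ᶜ = 0) ∧
    (∀ k < m - 1,
      (∀ v : ℝ × (Fin n → ℝ) → ℝ, ContDiff ℝ 1 v →
        ∫ p, fderiv ℝ v p (1, f p.1 p.2)
            ∂(Measure.map (fun s : ℝ => (s, flow s x₀))
                (volume.restrict (Icc (t k) (t (k + 1)))))
          = v (t (k + 1), flow (t (k + 1)) x₀) - v (t k, flow (t k) x₀)) ∧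
      (Measure.map (fun s : ℝ => (s, flow s x₀))
          (volume.restrict (Icc (t k) (t (k + 1)))))
        (Icc (t k) (t (k + 1)) ×ˢ X)ᶜ = 0) := by

  have hXclosed : IsClosed X := hX.isClosed
  constructor
  · intro k hk
    rw [Measure.dirac_apply' _ ((hXk k hk).1).measurableSet.compl]
    simp [Set.indicator_apply, hcons k hk]
  · intro k hk
    have hkle : k ≤ m - 1 := hk.le
    have hk1 : k + 1 ≤ m - 1 := hk
    have hI : Icc (t k) (t (k+1)) ⊆ Icc (0:ℝ) 1 :=
      Icc_subset_Icc (htmem k hkle).1 (htmem (k+1) hk1).2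
    have htle : t k ≤ t (k+1) := hmono k hk
    have hφcont : ContinuousOn (fun s : ℝ => (s, flow s x₀)) (Icc (t k) (t (k+1))) := by
      intro s hs
      exact (continuousAt_id.prodMk ((hode s (hI hs)).continuousAt)).continuousWithinAt
    have hφmeas : AEMeasurable (fun s : ℝ => (s, flow s x₀))
        (volume.restrict (Icc (t k) (t (k+1)))) :=
      hφcont.aemeasurable measurableSet_Icc
    constructor
    · intro v hv
      have hfderiv_cont : Continuous fun p : ℝ × (Fin n → ℝ) =>
          (fderiv ℝ v p) (1, f p.1 p.2) :=
        (hv.continuous_fderiv one_ne_zero).clm_apply (continuous_const.prodMk hf)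
      rw [integral_map hφmeas hfderiv_cont.aestronglyMeasurable]
      have hder : ∀ s ∈ Set.uIcc (t k) (t (k+1)),
          HasDerivAt (fun s => v (s, flow s x₀))
            ((fderiv ℝ v (s, flow s x₀)) (1, f s (flow s x₀))) s := by
        intro s hs
        rw [Set.uIcc_of_le htle] at hs
        have h1 : HasDerivAt (fun s : ℝ => (s, flow s x₀))
            ((1 : ℝ), f s (flow s x₀)) s :=
          (hasDerivAt_id s).prodMk (hode s (hI hs))
        exact ((hv.differentiable one_ne_zero) _).hasFDerivAt.comp_hasDerivAt s h1
      have hint : IntervalIntegrable (fun s =>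
          (fderiv ℝ v (s, flow s x₀)) (1, f s (flow s x₀))) volume (t k) (t (k+1)) := by
        apply ContinuousOn.intervalIntegrable
        rw [Set.uIcc_of_le htle]
        exact hfderiv_cont.comp_continuousOn hφcont
      have hFTC := intervalIntegral.integral_eq_sub_of_hasDerivAt hder hint
      rw [intervalIntegral.integral_of_le htle] at hFTC
      rw [MeasureTheory.integral_Icc_eq_integral_Ioc]
      exact hFTC
    · rw [Measure.map_apply_of_aemeasurable hφmeas
        (measurableSet_Icc.prod hXclosed.measurableSet).compl,
        Measure.restrict_apply' measurableSet_Icc]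
      convert measure_empty
      · ext s
        simp only [mem_inter_iff, mem_preimage, mem_compl_iff, mem_prod,
          mem_empty_iff_false, iff_false, not_and]
        intro h hs
        exact h hs (hstay s (hI hs))
      · infer_instance
end
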